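/- Let q ∈ (2,4), A > 0, Λ > 0, C > 0. Define T : [0,∞) → ℝ by T(t) = (A/2)t² + (C/4)t⁴ − (Λ/q)t^q, set t₀ = ((q−2)Λ/(2C))^(1/(4−q)) and D = A − ((4−q)/2)·Λ·((q−2)Λ/(2C))^((q−2)/(4−q)). Then: (i) if D > 0 then T has no critical point in (0,∞) and T'(t) > 0 for all t > 0; (ii) if D = 0 then t₀ is the unique critical point of T in (0,∞) and T'(t) ≥ 0 for all t > 0; (iii) if D < 0 then T has exactly two critical points t¹ < t² in (0,∞), with t¹ < t₀ < t², T''(t¹) < 0, T''(t²) > 0, and T(t¹) = max{T(t) : 0 ≤ t ≤ t₀}. -/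

import Mathlib

open Real Set

/-- For `q ∈ (2,4)`, `A, Λ, C > 0`, the fibering map
`T t = (A/2)t² + (C/4)t⁴ − (Λ/q)t^q`, with `t₀ = ((q−2)Λ/(2C))^(1/(4−q))` and
`D = A − ((4−q)/2)·Λ·((q−2)Λ/(2C))^((q−2)/(4−q))`, satisfies:
(i) if `D > 0` then `T` has no critical point in `(0,∞)` and `T' > 0` on `(0,∞)`;
(ii) if `D = 0` then `t₀` is the unique critical point in `(0,∞)` and `T' ≥ 0` there;
(iii) if `D < 0` then `T` has exactly two critical points `t₁ < t₀ < t₂` in `(0,∞)`,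
with `T''(t₁) < 0`, `T''(t₂) > 0`, and `T t₁ = max {T t : 0 ≤ t ≤ t₀}`. -/
theorem stmt_1 (q A Λ C : ℝ) (hq2 : 2 < q) (hq4 : q < 4)
    (hA : 0 < A) (hΛ : 0 < Λ) (hC : 0 < C) :
    let T : ℝ → ℝ := fun t => A / 2 * t ^ 2 + C / 4 * t ^ 4 - Λ / q * t ^ q
    let t₀ : ℝ := ((q - 2) * Λ / (2 * C)) ^ ((1 : ℝ) / (4 - q))
    let D : ℝ := A - (4 - q) / 2 * Λ * ((q - 2) * Λ / (2 * C)) ^ ((q - 2) / (4 - q))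
    (0 < D → (∀ t : ℝ, 0 < t → deriv T t ≠ 0) ∧ (∀ t : ℝ, 0 < t → 0 < deriv T t)) ∧
    (D = 0 → (∀ t : ℝ, 0 < t → (deriv T t = 0 ↔ t = t₀)) ∧ (∀ t : ℝ, 0 < t → 0 ≤ deriv T t)) ∧
    (D < 0 → ∃ t₁ t₂ : ℝ, 0 < t₁ ∧ t₁ < t₀ ∧ t₀ < t₂ ∧
      deriv T t₁ = 0 ∧ deriv T t₂ = 0 ∧
      (∀ t : ℝ, 0 < t → deriv T t = 0 → t = t₁ ∨ t = t₂) ∧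
      deriv (deriv T) t₁ < 0 ∧ 0 < deriv (deriv T) t₂ ∧
      (∀ t ∈ Icc (0 : ℝ) t₀, T t ≤ T t₁)) := by
  intro T t₀ D
  have hTdef : T = fun t : ℝ => A / 2 * t ^ 2 + C / 4 * t ^ 4 - Λ / q * t ^ q := rfl
  have hq0 : q ≠ 0 := by positivity
  have h4q : (0:ℝ) < 4 - q := by linarith
  have hq2' : (0:ℝ) < q - 2 := by linarith
  set K : ℝ := (q - 2) * Λ / (2 * C) with hKdef
  have ht₀def : t₀ = K ^ ((1:ℝ) / (4 - q)) := rfl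
  have hDdef : D = A - (4 - q) / 2 * Λ * K ^ ((q - 2) / (4 - q)) := rfl
  have hK : 0 < K := div_pos (mul_pos hq2' hΛ) (by linarith)
  have ht₀pos : 0 < t₀ := by rw [ht₀def]; exact rpow_pos_of_pos hK _
  have ht₀pow : t₀ ^ (4 - q) = K := by
    rw [ht₀def, ← rpow_mul hK.le, one_div, inv_mul_cancel₀ h4q.ne', rpow_one]
  set g : ℝ → ℝ := fun t => A + C * t ^ 2 - Λ * t ^ (q - 2) with hgdef
  have hg0 : g 0 = A := by
    simp [hgdef, Real.zero_rpow (by intro h; linarith : q - 2 ≠ 0)]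
  -- derivative of g
  have hgderiv : ∀ t : ℝ, 0 < t →
      HasDerivAt g (2 * C * t - (q - 2) * Λ * t ^ (q - 3)) t := by
    intro t ht
    have h1 : HasDerivAt (fun x : ℝ => x ^ (q - 2)) ((q - 2) * t ^ (q - 2 - 1)) t :=
      Real.hasDerivAt_rpow_const (Or.inl ht.ne')
    have h2 : HasDerivAt (fun x : ℝ => x ^ 2) (2 * t) t := by
      simpa using hasDerivAt_pow 2 t
    have h3 := ((hasDerivAt_const t A).add (h2.const_mul C)).sub (h1.const_mul Λ)
    refine h3.congr_deriv ?_
    rw [show q - 2 - 1 = q - 3 by ring]; ring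
  -- derivative of T
  have hTderiv : ∀ t : ℝ, 0 < t → HasDerivAt T (t * g t) t := by
    intro t ht
    have h1 : HasDerivAt (fun x : ℝ => x ^ q) (q * t ^ (q - 1)) t :=
      Real.hasDerivAt_rpow_const (Or.inl ht.ne')
    have h2 : HasDerivAt (fun x : ℝ => x ^ 2) (2 * t) t := by
      simpa using hasDerivAt_pow 2 t
    have h4 : HasDerivAt (fun x : ℝ => x ^ 4) (4 * t ^ 3) t := by
      have := hasDerivAt_pow 4 t
      norm_num at this; exact this
    have h3 := ((h2.const_mul (A/2)).add (h4.const_mul (C/4))).sub (h1.const_mul (Λ/q))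
    refine h3.congr_deriv ?_
    have hq1 : t ^ (q - 1) = t ^ (q - 2) * t := by
      rw [show q - 1 = q - 2 + 1 by ring, rpow_add_one ht.ne']
    rw [hq1, hgdef]
    field_simp
  have hderivT : ∀ t : ℝ, 0 < t → deriv T t = t * g t := fun t ht => (hTderiv t ht).deriv
  -- sign of g'
  have hCK : 2 * C * K = (q - 2) * Λ := by rw [hKdef]; field_simp
  have hgd_neg : ∀ t : ℝ, 0 < t → t < t₀ → 2 * C * t - (q - 2) * Λ * t ^ (q - 3) < 0 := by
    intro t ht htlt
    have htK : t ^ (4 - q) < K := by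
      rw [← ht₀pow]; exact rpow_lt_rpow ht.le htlt h4q
    have e1 : t ^ (q - 3) * t ^ (3 - q) = 1 := by
      rw [← rpow_add ht]; norm_num
    have e2 : t * t ^ (3 - q) = t ^ (4 - q) := by
      nth_rewrite 1 [← rpow_one t]; rw [← rpow_add ht]; congr 1; ring
    have hpos : 0 < t ^ ((3:ℝ) - q) := rpow_pos_of_pos ht _
    rw [sub_neg, ← mul_lt_mul_iff_of_pos_right hpos]
    calc 2 * C * t * t ^ (3 - q) = 2 * C * t ^ (4 - q) := by rw [mul_assoc (2*C), e2]
      _ < 2 * C * K := by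
          have := mul_lt_mul_of_pos_left htK (by linarith : (0:ℝ) < 2 * C)
          linarith
      _ = (q - 2) * Λ := hCK
      _ = (q - 2) * Λ * (t ^ (q - 3) * t ^ (3 - q)) := by rw [e1, mul_one]
      _ = (q - 2) * Λ * t ^ (q - 3) * t ^ (3 - q) := by ring
  have hgd_pos : ∀ t : ℝ, t₀ < t → 0 < 2 * C * t - (q - 2) * Λ * t ^ (q - 3) := by
    intro t htlt
    have ht : 0 < t := ht₀pos.trans htlt
    have htK : K < t ^ (4 - q) := by
      rw [← ht₀pow]; exact rpow_lt_rpow ht₀pos.le htlt h4q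
    have e1 : t ^ (q - 3) * t ^ (3 - q) = 1 := by
      rw [← rpow_add ht]; norm_num
    have e2 : t * t ^ (3 - q) = t ^ (4 - q) := by
      nth_rewrite 1 [← rpow_one t]; rw [← rpow_add ht]; congr 1; ring
    have hpos : 0 < t ^ ((3:ℝ) - q) := rpow_pos_of_pos ht _
    rw [sub_pos, ← mul_lt_mul_iff_of_pos_right hpos]
    calc (q - 2) * Λ * t ^ (q - 3) * t ^ (3 - q)
        = (q - 2) * Λ * (t ^ (q - 3) * t ^ (3 - q)) := by ring
      _ = (q - 2) * Λ := by rw [e1, mul_one]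
      _ = 2 * C * K := hCK.symm
      _ < 2 * C * t ^ (4 - q) := by
          have := mul_lt_mul_of_pos_left htK (by linarith : (0:ℝ) < 2 * C)
          linarith
      _ = 2 * C * t * t ^ (3 - q) := by rw [mul_assoc (2*C), e2]
  -- value at t₀
  have hP : t₀ ^ (q - 2) = K ^ ((q - 2) / (4 - q)) := by
    rw [ht₀def, ← rpow_mul hK.le]
    congr 1
    rw [one_div, ← div_eq_inv_mul]
  have ht₀sq : t₀ ^ (2:ℕ) = K ^ ((q - 2) / (4 - q)) * K := by
    rw [← rpow_natCast t₀ 2,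
      show ((2:ℕ):ℝ) = (q - 2) + (4 - q) by push_cast; ring,
      rpow_add ht₀pos, hP, ht₀pow]
  have hgt₀ : g t₀ = D := by
    rw [hgdef]
    simp only
    rw [ht₀sq, hP, hDdef]
    have hCK' : C * K = (q - 2) * Λ / 2 := by linarith [hCK]
    linear_combination (K ^ ((q - 2) / (4 - q))) * hCK'
  -- continuity of g
  have hgcont : Continuous g := by
    rw [hgdef]
    exact (continuous_const.add (continuous_const.mul (continuous_pow 2))).sub
      (continuous_const.mul (Real.continuous_rpow_const (by linarith)))
  -- monotonicity of g
  have hganti : StrictAntiOn g (Icc 0 t₀) := by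
    apply strictAntiOn_of_deriv_neg (convex_Icc _ _) hgcont.continuousOn
    rw [interior_Icc]
    intro x hx
    rw [(hgderiv x hx.1).deriv]
    exact hgd_neg x hx.1 hx.2
  have hgmono : StrictMonoOn g (Ici t₀) := by
    apply strictMonoOn_of_deriv_pos (convex_Ici _) hgcont.continuousOn
    rw [interior_Ici]
    intro x hx
    rw [(hgderiv x (ht₀pos.trans hx)).deriv]
    exact hgd_pos x hx
  have hgmin : ∀ t : ℝ, 0 < t → t ≠ t₀ → D < g t := by
    intro t ht hne
    rcases lt_or_gt_of_ne hne with h | h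
    · rw [← hgt₀]
      exact hganti ⟨ht.le, h.le⟩ ⟨ht₀pos.le, le_rfl⟩ h
    · rw [← hgt₀]
      exact hgmono self_mem_Ici h.le h
  refine ⟨?_, ?_, ?_⟩
  · -- case D > 0
    intro hD
    have key : ∀ t : ℝ, 0 < t → 0 < deriv T t := by
      intro t ht
      rw [hderivT t ht]
      apply mul_pos ht
      rcases eq_or_ne t t₀ with rfl | hne
      · rw [hgt₀]; exact hD
      · exact hD.trans (hgmin t ht hne)
    exact ⟨fun t ht => (key t ht).ne', key⟩
  · -- case D = 0
    intro hD
    constructor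
    · intro t ht
      rw [hderivT t ht, mul_eq_zero]
      constructor
      · rintro (h | h)
        · exact absurd h ht.ne'
        · by_contra hne
          have := hgmin t ht hne
          rw [hD] at this
          linarith
      · rintro rfl
        right; rw [hgt₀, hD]
    · intro t ht
      rw [hderivT t ht]
      apply mul_nonneg ht.le
      rcases eq_or_ne t t₀ with rfl | hne
      · rw [hgt₀, hD]
      · have := hgmin t ht hne; rw [hD] at this; linarith
  · -- case D < 0
    intro hD
    have h0mem : (0:ℝ) ∈ Ioo (g t₀) (g 0) := by
      rw [hgt₀, hg0]; exact ⟨hD, hA⟩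
    obtain ⟨t₁, ht₁mem, hgt₁⟩ :=
      intermediate_value_Ioo' ht₀pos.le hgcont.continuousOn h0mem
    -- find M with g M > 0
    set X : ℝ := (Λ / C) ^ ((1:ℝ) / (4 - q)) with hXdef
    have hXpos : 0 < X := rpow_pos_of_pos (div_pos hΛ hC) _
    set M : ℝ := max (t₀ + 1) (X + 1) with hMdef
    have hMt₀ : t₀ < M := lt_of_lt_of_le (lt_add_one t₀) (le_max_left _ _)
    have hMX : X < M := lt_of_lt_of_le (lt_add_one X) (le_max_right _ _)
    have hMpos : 0 < M := hXpos.trans hMX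
    have hXpow : X ^ (4 - q) = Λ / C := by
      rw [hXdef, ← rpow_mul (div_pos hΛ hC).le, one_div, inv_mul_cancel₀ h4q.ne', rpow_one]
    have hM4q : Λ / C < M ^ (4 - q) := by
      rw [← hXpow]; exact rpow_lt_rpow hXpos.le hMX h4q
    have hgM : 0 < g M := by
      rw [hgdef]
      simp only
      have hM2 : M ^ (2:ℕ) = M ^ (q - 2) * M ^ (4 - q) := by
        rw [← rpow_natCast M 2,
          show ((2:ℕ):ℝ) = (q - 2) + (4 - q) by push_cast; ring,
          rpow_add hMpos]
      have h5 : Λ < C * M ^ (4 - q) := by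
        have := mul_lt_mul_of_pos_left hM4q hC
        rwa [mul_div_cancel₀ _ hC.ne'] at this
      have h6 : 0 < M ^ (q - 2) := rpow_pos_of_pos hMpos _
      nlinarith [mul_pos h6 (sub_pos.mpr h5)]
    have h0mem2 : (0:ℝ) ∈ Ioo (g t₀) (g M) := by rw [hgt₀]; exact ⟨hD, hgM⟩
    obtain ⟨t₂, ht₂mem, hgt₂⟩ :=
      intermediate_value_Ioo hMt₀.le hgcont.continuousOn h0mem2
    have ht₁pos : 0 < t₁ := ht₁mem.1
    have ht₂pos : 0 < t₂ := ht₀pos.trans ht₂mem.1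
    -- second derivative formula
    have hTd2 : ∀ s : ℝ, 0 < s → g s = 0 →
        deriv (deriv T) s = s * (2 * C * s - (q - 2) * Λ * s ^ (q - 3)) := by
      intro s hs hgs
      have hev : deriv T =ᶠ[nhds s] fun t => t * g t := by
        filter_upwards [Ioi_mem_nhds hs] with x hx using hderivT x hx
      rw [hev.deriv_eq]
      have hd : HasDerivAt (fun t => t * g t)
          (1 * g s + s * (2 * C * s - (q - 2) * Λ * s ^ (q - 3))) s :=
        (hasDerivAt_id s).mul (hgderiv s hs)
      rw [hd.deriv, hgs]; ring
    refine ⟨t₁, t₂, ht₁pos, ht₁mem.2, ht₂mem.1, ?_, ?_, ?_, ?_, ?_, ?_⟩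
    · rw [hderivT t₁ ht₁pos, hgt₁, mul_zero]
    · rw [hderivT t₂ ht₂pos, hgt₂, mul_zero]
    · intro t ht hdt
      rw [hderivT t ht, mul_eq_zero] at hdt
      rcases hdt with h | h
      · exact absurd h ht.ne'
      · rcases le_or_gt t t₀ with hle | hlt
        · left
          exact hganti.injOn ⟨ht.le, hle⟩ ⟨ht₁pos.le, ht₁mem.2.le⟩ (by rw [h, hgt₁])
        · right
          exact hgmono.injOn hlt.le ht₂mem.1.le (by rw [h, hgt₂])
    · rw [hTd2 t₁ ht₁pos hgt₁]
      exact mul_neg_of_pos_of_neg ht₁pos (hgd_neg t₁ ht₁pos ht₁mem.2)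
    · rw [hTd2 t₂ ht₂pos hgt₂]
      exact mul_pos ht₂pos (hgd_pos t₂ ht₂mem.1)
    · -- maximum on [0, t₀]
      have hTcont : Continuous T := by
        rw [hTdef]
        exact ((continuous_const.mul (continuous_pow 2)).add
          (continuous_const.mul (continuous_pow 4))).sub
          (continuous_const.mul (Real.continuous_rpow_const (by linarith)))
      have hTmono : StrictMonoOn T (Icc 0 t₁) := by
        apply strictMonoOn_of_deriv_pos (convex_Icc _ _) hTcont.continuousOn
        rw [interior_Icc]
        intro x hx
        rw [hderivT x hx.1]
        apply mul_pos hx.1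
        have h := hganti ⟨hx.1.le, (hx.2.trans ht₁mem.2).le⟩ ⟨ht₁pos.le, ht₁mem.2.le⟩ hx.2
        rwa [hgt₁] at h
      have hTanti : StrictAntiOn T (Icc t₁ t₀) := by
        apply strictAntiOn_of_deriv_neg (convex_Icc _ _) hTcont.continuousOn
        rw [interior_Icc]
        intro x hx
        rw [hderivT x (ht₁pos.trans hx.1)]
        apply mul_neg_of_pos_of_neg (ht₁pos.trans hx.1)
        have h := hganti ⟨ht₁pos.le, ht₁mem.2.le⟩ ⟨(ht₁pos.trans hx.1).le, hx.2.le⟩ hx.1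
        rwa [hgt₁] at h
      intro t htmem
      rcases le_total t t₁ with h | h
      · exact hTmono.monotoneOn ⟨htmem.1, h⟩ ⟨ht₁pos.le, le_rfl⟩ h
      · exact hTanti.antitoneOn ⟨le_rfl, ht₁mem.2.le⟩ ⟨h, htmem.2⟩ h
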